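/- Let F = F₀ + F_v and G = G₀ + G_v be elements of ℍ_ℂ \ {0} whose vector parts satisfy F_v ≠ 0 and G_v ≠ 0. Then the Sylvester operator S_{F,G} is singular (i.e., the ℂ-linear endomorphism z ↦ Fz + zG of ℍ_ℂ is not injective) if and only if (F₀ + G₀)⁴ + 2(F₀ + G₀)²(F_v^s + G_v^s) + (F_v^s − G_v^s)² = 0. -/

import Mathlib

open Quaternion

/-- The Sylvester operator `S_{F,G}(z) = Fz + zG` as a `ℂ`-linear endomorphism of the
complex quaternions. -/
noncomputable def sylvesterOp (F G : Quaternion ℂ) : Quaternion ℂ →ₗ[ℂ] Quaternion ℂ :=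
  @LinearMap.mulLeft ℂ _ _ _ _ (Algebra.to_smulCommClass (R := ℂ) (A := Quaternion ℂ)) F +
    @LinearMap.mulRight ℂ _ _ _ _ (IsScalarTower.right (R := ℂ) (A := Quaternion ℂ)) G

/-- Auxiliary basis of the complex quaternions, elaborated with the `Quaternion` instances. -/
noncomputable def qBasisAux : Module.Basis (Fin 4) ℂ (Quaternion ℂ) :=
  Module.Basis.ofEquivFun
    { toFun := fun q => ![q.re, q.imI, q.imJ, q.imK]
      invFun := fun f => ⟨f 0, f 1, f 2, f 3⟩
      map_add' := fun a b => by funext i; fin_cases i <;> rfl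
      map_smul' := fun c a => by funext i; fin_cases i <;> rfl
      left_inv := fun q => rfl
      right_inv := fun f => by funext i; fin_cases i <;> rfl }

lemma qBasisAux_repr (q : Quaternion ℂ) (i : Fin 4) :
    qBasisAux.repr q i = ![q.re, q.imI, q.imJ, q.imK] i := rfl

lemma qBasisAux_re (i : Fin 4) :
    (qBasisAux i).re = Pi.single (M := fun _ => ℂ) i 1 0 := by
  simp only [qBasisAux, Module.Basis.coe_ofEquivFun]
  rfl

lemma qBasisAux_imI (i : Fin 4) :
    (qBasisAux i).imI = Pi.single (M := fun _ => ℂ) i 1 1 := by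
  simp only [qBasisAux, Module.Basis.coe_ofEquivFun]
  rfl

lemma qBasisAux_imJ (i : Fin 4) :
    (qBasisAux i).imJ = Pi.single (M := fun _ => ℂ) i 1 2 := by
  simp only [qBasisAux, Module.Basis.coe_ofEquivFun]
  rfl

lemma qBasisAux_imK (i : Fin 4) :
    (qBasisAux i).imK = Pi.single (M := fun _ => ℂ) i 1 3 := by
  simp only [qBasisAux, Module.Basis.coe_ofEquivFun]
  rfl

lemma det4Aux (a b c d e f g h i j k l m n o p : ℂ) :
    Matrix.det !![a,b,c,d;e,f,g,h;i,j,k,l;m,n,o,p] =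
      a*(f*(k*p-l*o)-g*(j*p-l*n)+h*(j*o-k*n))
      - b*(e*(k*p-l*o)-g*(i*p-l*m)+h*(i*o-k*m))
      + c*(e*(j*p-l*n)-f*(i*p-l*m)+h*(i*n-j*m))
      - d*(e*(j*o-k*n)-f*(i*o-k*m)+g*(i*n-j*m)) := by
  rw [Matrix.det_succ_row_zero]
  simp [Fin.sum_univ_succ, Matrix.det_fin_three, Matrix.submatrix_apply, Fin.succAbove]
  ring

set_option maxHeartbeats 1000000 in
lemma toMatrix_sylvesterAux (F G : Quaternion ℂ) :
    LinearMap.toMatrix qBasisAux qBasisAux (sylvesterOp F G) =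
    !![F.re+G.re, -(F.imI+G.imI), -(F.imJ+G.imJ), -(F.imK+G.imK);
       F.imI+G.imI, F.re+G.re, -F.imK+G.imK, F.imJ-G.imJ;
       F.imJ+G.imJ, F.imK-G.imK, F.re+G.re, -F.imI+G.imI;
       F.imK+G.imK, -F.imJ+G.imJ, F.imI-G.imI, F.re+G.re] := by
  ext i j
  rw [LinearMap.toMatrix_apply]
  fin_cases i <;> fin_cases j <;>
    · simp only [qBasisAux_repr, sylvesterOp,
        LinearMap.add_apply, LinearMap.mulLeft_apply, LinearMap.mulRight_apply]
      simp [qBasisAux_re, qBasisAux_imI, qBasisAux_imJ, qBasisAux_imK]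
      try ring


set_option maxHeartbeats 1000000 in
lemma det_sylvesterAux (F G : Quaternion ℂ) :
    LinearMap.det (sylvesterOp F G) =
      (F.re + G.re) ^ 4 + 2 * (F.re + G.re) ^ 2 * (normSq F.im + normSq G.im) +
        (normSq F.im - normSq G.im) ^ 2 := by
  have h := LinearMap.det_toMatrix qBasisAux (sylvesterOp F G)
  rw [← h, toMatrix_sylvesterAux]
  have hF : normSq F.im = F.imI^2 + F.imJ^2 + F.imK^2 := by
    simp [normSq_def']
  have hG : normSq G.im = G.imI^2 + G.imJ^2 + G.imK^2 := by
    simp [normSq_def']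
  rw [hF, hG, det4Aux]
  ring

lemma not_injective_iff_det_eq_zero_aux (f : Quaternion ℂ →ₗ[ℂ] Quaternion ℂ) :
    ¬ Function.Injective f ↔ LinearMap.det f = 0 := by
  constructor
  · intro hni
    by_contra hd
    apply hni
    have hinj := (f.equivOfDetNeZero hd).injective
    have hco : ⇑(f.equivOfDetNeZero hd) = ⇑f := rfl
    rwa [hco] at hinj
  · intro hd hi
    have := LinearMap.bot_lt_ker_of_det_eq_zero hd
    rw [LinearMap.ker_eq_bot.mpr hi] at this
    exact lt_irrefl _ this

/-- For `F`, `G` nonzero complex quaternions with nonzero vector parts, the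
Sylvester operator `S_{F,G}` is singular iff
`(F₀+G₀)⁴ + 2(F₀+G₀)²(F_v^s + G_v^s) + (F_v^s − G_v^s)² = 0`. -/
theorem sylvester_singular_iff (F G : Quaternion ℂ) (hF : F ≠ 0) (hG : G ≠ 0)
    (hFv : F.im ≠ 0) (hGv : G.im ≠ 0) :
    ¬ Function.Injective (sylvesterOp F G) ↔
      (F.re + G.re) ^ 4 + 2 * (F.re + G.re) ^ 2 * (normSq F.im + normSq G.im) +
        (normSq F.im - normSq G.im) ^ 2 = 0 := by
  rw [not_injective_iff_det_eq_zero_aux, det_sylvesterAux]
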